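/- Let X be the half-plane with crushed boundary: X = {0} ∪ {(x,y) ∈ ℝ² : x > 0}, with d((x₁,y₁),(x₂,y₂)) = min(x₁+x₂, √((x₂−x₁)²+(y₂−y₁)²)) and d((x,y),0) = x. Then X is not a CAT(0) space. (For instance, there exist two distinct geodesics between two points of X, namely between (1, y₁) and (1, y₂) when |y₁ − y₂| = 2.) -/

import Mathlib

/-- The half-plane with crushed boundary: the open right half-plane together with one
extra point `none` (the crushed boundary point `0`). -/
def CHP : Type := Option {p : ℝ × ℝ // 0 < p.1}

/-- The distance of Example 6.2. -/
noncomputable def chpDist : CHP → CHP → ℝ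
  | none, none => 0
  | none, some p => p.1.1
  | some p, none => p.1.1
  | some p, some q =>
      min (p.1.1 + q.1.1) (Real.sqrt ((q.1.1 - p.1.1) ^ 2 + (q.1.2 - p.1.2) ^ 2))

/-- The point `(1, y)` of the open half-plane, as a point of `CHP`. -/
def CHP.pt (y : ℝ) : CHP := some ⟨(1, y), one_pos⟩

/-- A geodesic parameterized proportionally to arclength by `[0,1]`. -/
def IsGeodesic {X : Type*} [MetricSpace X] (γ : ℝ → X) : Prop :=
  ∀ s ∈ Set.Icc (0:ℝ) 1, ∀ t ∈ Set.Icc (0:ℝ) 1,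
    dist (γ s) (γ t) = dist (γ 0) (γ 1) * |s - t|

/-- `X` is a CAT(0) space: it is geodesic, and every geodesic triangle satisfies the
CAT(0) comparison inequality with respect to Euclidean (here: `ℂ`) comparison
triangles. -/
def IsCAT0 (X : Type*) [MetricSpace X] : Prop :=
  (∀ x y : X, ∃ γ : ℝ → X, γ 0 = x ∧ γ 1 = y ∧ IsGeodesic γ) ∧
  (∀ γ₁ γ₂ : ℝ → X, IsGeodesic γ₁ → IsGeodesic γ₂ → γ₁ 0 = γ₂ 0 →
    ∀ x' y' z' : ℂ,
      dist x' y' = dist (γ₁ 0) (γ₁ 1) →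
      dist x' z' = dist (γ₂ 0) (γ₂ 1) →
      dist y' z' = dist (γ₁ 1) (γ₂ 1) →
      ∀ s ∈ Set.Icc (0:ℝ) 1, ∀ t ∈ Set.Icc (0:ℝ) 1,
        dist (γ₁ s) (γ₂ t) ≤ dist (x' + s • (y' - x')) (x' + t • (z' - x')))

lemma chpDist_pt (a b : ℝ) : chpDist (CHP.pt a) (CHP.pt b) = min 2 |b - a| := by
  show min ((1:ℝ) + 1) (Real.sqrt (((1:ℝ) - 1) ^ 2 + (b - a) ^ 2)) = min 2 |b - a|
  norm_num [Real.sqrt_sq_eq_abs]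

/-- The geodesic through the crushed point. -/
noncomputable def gmid (y₁ y₂ : ℝ) (t : ℝ) : CHP :=
  if h : t < 1/2 then some ⟨(1 - 2*t, y₁), by show (0:ℝ) < 1 - 2*t; linarith⟩
  else if h' : 1/2 < t then some ⟨(2*t - 1, y₂), by show (0:ℝ) < 2*t - 1; linarith⟩
  else none

lemma gmid_zero (y₁ y₂ : ℝ) : gmid y₁ y₂ 0 = CHP.pt y₁ := by
  unfold gmid
  erw [dif_pos (by norm_num : (0:ℝ) < 1/2)]
  show (some ⟨((1:ℝ) - 2*0, y₁), _⟩ : CHP) = some ⟨(1, y₁), one_pos⟩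
  norm_num

lemma gmid_one (y₁ y₂ : ℝ) : gmid y₁ y₂ 1 = CHP.pt y₂ := by
  unfold gmid
  erw [dif_neg (by norm_num : ¬ (1:ℝ) < 1/2), dif_pos (by norm_num : (1:ℝ)/2 < 1)]
  show (some ⟨(2*(1:ℝ) - 1, y₂), _⟩ : CHP) = some ⟨(1, y₂), one_pos⟩
  norm_num

lemma gmid_half (y₁ y₂ : ℝ) : gmid y₁ y₂ (1/2) = none := by
  unfold gmid
  erw [dif_neg (lt_irrefl ((1:ℝ)/2)), dif_neg (lt_irrefl ((1:ℝ)/2))]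

lemma two_geo (m : MetricSpace CHP)
    (hm : ∀ a b : CHP, m.dist a b = chpDist a b) (y₁ y₂ : ℝ) (h : |y₁ - y₂| = 2) :
    ∃ γ₀ γ₁ : ℝ → CHP,
        @IsGeodesic CHP m γ₀ ∧ @IsGeodesic CHP m γ₁ ∧
        γ₀ 0 = CHP.pt y₁ ∧ γ₀ 1 = CHP.pt y₂ ∧
        γ₁ 0 = CHP.pt y₁ ∧ γ₁ 1 = CHP.pt y₂ ∧
        ∃ t ∈ Set.Icc (0:ℝ) 1, γ₀ t ≠ γ₁ t := by
  letI : MetricSpace CHP := m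
  have hd : ∀ a b : CHP, dist a b = chpDist a b := hm
  have habs : |y₂ - y₁| = 2 := by rwa [abs_sub_comm]
  have hsq : (y₂ - y₁) ^ 2 = 4 := by rw [← sq_abs, habs]; norm_num
  refine ⟨fun t => CHP.pt (y₁ + t * (y₂ - y₁)), gmid y₁ y₂, ?_, ?_, ?_, ?_,
    gmid_zero y₁ y₂, gmid_one y₁ y₂, 1/2, ⟨by norm_num, by norm_num⟩, ?_⟩
  · -- straight line geodesic
    intro s hs t ht
    simp only
    rw [hd, hd, chpDist_pt, chpDist_pt]
    have e1 : (y₁ + t * (y₂ - y₁)) - (y₁ + s * (y₂ - y₁)) = (t - s) * (y₂ - y₁) := by ring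
    have e2 : (y₁ + 1 * (y₂ - y₁)) - (y₁ + 0 * (y₂ - y₁)) = y₂ - y₁ := by ring
    rw [e1, e2, abs_mul, habs]
    have hle : |s - t| ≤ 1 := abs_sub_le_iff.mpr ⟨by linarith [hs.1, hs.2, ht.1, ht.2],
      by linarith [hs.1, hs.2, ht.1, ht.2]⟩
    rw [abs_sub_comm t s, min_eq_right (by linarith : |s - t| * 2 ≤ 2)]
    rw [min_eq_right (by norm_num : (2:ℝ) ≤ 2)]
    ring
  · -- geodesic through the crushed point
    have key : ∀ s ∈ Set.Icc (0:ℝ) 1, ∀ t ∈ Set.Icc (0:ℝ) 1, s ≤ t →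
        dist (gmid y₁ y₂ s) (gmid y₁ y₂ t) = 2 * (t - s) := by
      intro s hs t ht hst
      rw [hd]
      rcases lt_trichotomy s (1/2) with hs' | hs' | hs'
      · rcases lt_trichotomy t (1/2) with ht' | ht' | ht'
        · unfold gmid
          erw [dif_pos hs', dif_pos ht']
          show min ((1 - 2*s) + (1 - 2*t))
            (Real.sqrt ((1 - 2*t - (1 - 2*s)) ^ 2 + (y₁ - y₁) ^ 2)) = 2 * (t - s)
          rw [show (1 - 2*t - (1 - 2*s)) ^ 2 + (y₁ - y₁) ^ 2 = (2 * (t - s)) ^ 2 from by ring,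
            Real.sqrt_sq (by linarith)]
          exact min_eq_right (by linarith)
        · subst ht'
          unfold gmid
          erw [dif_pos hs', dif_neg (lt_irrefl ((1:ℝ)/2)), dif_neg (lt_irrefl ((1:ℝ)/2))]
          show (1:ℝ) - 2*s = 2 * (1/2 - s)
          ring
        · unfold gmid
          erw [dif_pos hs', dif_neg (by linarith : ¬ t < 1/2), dif_pos ht']
          show min ((1 - 2*s) + (2*t - 1))
            (Real.sqrt ((2*t - 1 - (1 - 2*s)) ^ 2 + (y₂ - y₁) ^ 2)) = 2 * (t - s)
          rw [show (1 - 2*s) + (2*t - 1) = 2 * (t - s) from by ring]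
          refine min_eq_left ?_
          calc 2 * (t - s) = Real.sqrt ((2 * (t - s)) ^ 2) :=
                (Real.sqrt_sq (by linarith)).symm
            _ ≤ _ := Real.sqrt_le_sqrt (by
                nlinarith [hs.1, ht.2, hsq,
                  mul_nonneg (by linarith [hs.1, ht.2] : (0:ℝ) ≤ 1 - (t - s))
                    (by linarith : (0:ℝ) ≤ 1 + (t - s)), sq_nonneg (2*t + 2*s - 2)])
      · subst hs'
        rcases lt_trichotomy t (1/2) with ht' | ht' | ht'
        · exact absurd (lt_of_le_of_lt hst ht') (lt_irrefl _)
        · subst ht'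
          unfold gmid
          erw [dif_neg (lt_irrefl ((1:ℝ)/2)), dif_neg (lt_irrefl ((1:ℝ)/2))]
          show (0:ℝ) = 2 * (1/2 - 1/2)
          ring
        · unfold gmid
          erw [dif_neg (lt_irrefl ((1:ℝ)/2)), dif_neg (lt_irrefl ((1:ℝ)/2)),
            dif_neg (by linarith : ¬ t < 1/2), dif_pos ht']
          show 2*t - 1 = 2 * (t - 1/2)
          ring
      · have ht' : 1/2 < t := lt_of_lt_of_le hs' hst
        unfold gmid
        erw [dif_neg (by linarith : ¬ s < 1/2), dif_pos hs',
          dif_neg (by linarith : ¬ t < 1/2), dif_pos ht']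
        show min ((2*s - 1) + (2*t - 1))
          (Real.sqrt ((2*t - 1 - (2*s - 1)) ^ 2 + (y₂ - y₂) ^ 2)) = 2 * (t - s)
        rw [show (2*t - 1 - (2*s - 1)) ^ 2 + (y₂ - y₂) ^ 2 = (2 * (t - s)) ^ 2 from by ring,
          Real.sqrt_sq (by linarith)]
        exact min_eq_right (by linarith)
    intro s hs t ht
    rw [key 0 (by norm_num) 1 (by norm_num) (by norm_num)]
    rcases le_total s t with hle | hle
    · rw [key s hs t ht hle, abs_sub_comm s t, abs_of_nonneg (sub_nonneg.mpr hle)]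
      ring
    · rw [dist_comm, key t ht s hs hle, abs_of_nonneg (sub_nonneg.mpr hle)]
      ring
  · show CHP.pt (y₁ + 0 * (y₂ - y₁)) = CHP.pt y₁
    norm_num
  · show CHP.pt (y₁ + 1 * (y₂ - y₁)) = CHP.pt y₂
    rw [show y₁ + 1 * (y₂ - y₁) = y₂ from by ring]
  · rw [gmid_half]
    exact Option.some_ne_none _

/-- the half-plane with crushed boundary is not CAT(0); indeed there
exist two distinct geodesics between `(1, y₁)` and `(1, y₂)` when `|y₁ - y₂| = 2`. -/
theorem CHP_not_CAT0 (m : MetricSpace CHP)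
    (hm : ∀ a b : CHP, m.dist a b = chpDist a b) :
    ¬ @IsCAT0 CHP m ∧
    ∀ y₁ y₂ : ℝ, |y₁ - y₂| = 2 →
      ∃ γ₀ γ₁ : ℝ → CHP,
        @IsGeodesic CHP m γ₀ ∧ @IsGeodesic CHP m γ₁ ∧
        γ₀ 0 = CHP.pt y₁ ∧ γ₀ 1 = CHP.pt y₂ ∧
        γ₁ 0 = CHP.pt y₁ ∧ γ₁ 1 = CHP.pt y₂ ∧
        ∃ t ∈ Set.Icc (0:ℝ) 1, γ₀ t ≠ γ₁ t := by
  letI : MetricSpace CHP := m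
  have hd : ∀ a b : CHP, dist a b = chpDist a b := hm
  constructor
  · intro hcat
    obtain ⟨-, hcomp⟩ := hcat
    obtain ⟨γ₀, γ₁, hg0, hg1, h00, h01, h10, h11, t₀, ht₀, hne⟩ :=
      two_geo m hm 0 2 (by norm_num)
    have h1 : dist (γ₀ 0) (γ₀ 1) = 2 := by
      rw [h00, h01, hd, chpDist_pt]; norm_num
    have h2 : dist (γ₁ 0) (γ₁ 1) = 2 := by
      rw [h10, h11, hd, chpDist_pt]; norm_num
    have h3 : dist (γ₀ 1) (γ₁ 1) = 0 := by rw [h01, h11, dist_self]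
    have hcd : dist (0:ℂ) (2:ℂ) = 2 := by
      rw [Complex.dist_eq]
      norm_num
    have key := hcomp γ₀ γ₁ hg0 hg1 (by rw [h00, h10]) 0 2 2
      (by rw [h1, hcd]) (by rw [h2, hcd]) (by rw [h3, dist_self]) t₀ ht₀ t₀ ht₀
    rw [dist_self] at key
    exact hne (dist_eq_zero.mp (le_antisymm key dist_nonneg))
  · exact fun y₁ y₂ hy => two_geo m hm y₁ y₂ hy
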